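/- Let λ, μ > 0 with ρ = λ/μ < 1, let i ≥ 0 and j ≥ 1 be integers. Then the function t ↦ p_{ij}(t) defined by the explicit integral formula is differentiable on (0, ∞) and satisfies the Kolmogorov forward equation d/dt p_{ij}(t) = λ·p_{i,j−1}(t) + μ·p_{i,j+1}(t) − (λ+μ)·p_{ij}(t) for all t > 0, where p_{ij}(t) = (2/π)·ρ^{(j−i)/2}·∫₀^π e^{−μ t γ(y)}/γ(y) · a_i(y)·a_j(y) dy + (1−ρ)·ρ^j. -/

import Mathlib

open Real MeasureTheory Set Filter

/-- γ(y) = 1 + ρ − 2√ρ·cos(y). -/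
noncomputable def gam (ρ y : ℝ) : ℝ := 1 + ρ - 2 * Real.sqrt ρ * Real.cos y

/-- a_k(y) = sin(k·y) − √ρ·sin((k+1)·y). -/
noncomputable def aco (ρ : ℝ) (k : ℕ) (y : ℝ) : ℝ :=
  Real.sin ((k : ℝ) * y) - Real.sqrt ρ * Real.sin (((k : ℝ) + 1) * y)

/-- Transient expected queue length of an M/M/1 queue started with `i` customers. -/
noncomputable def EL (lam mu : ℝ) (i : ℕ) (t : ℝ) : ℝ :=
  (2 / Real.pi) * (lam / mu) ^ ((1 - (i : ℝ)) / 2) *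
    (∫ y in (0 : ℝ)..Real.pi,
      Real.exp (-(mu * t * gam (lam / mu) y)) / (gam (lam / mu) y) ^ 2 *
        (aco (lam / mu) i y * Real.sin y)) +
  (lam / mu) / (1 - lam / mu)

/-- Transient probability that an M/M/1 queue started with `i` customers has `j` at time `t`. -/
noncomputable def pq (lam mu : ℝ) (i j : ℕ) (t : ℝ) : ℝ :=
  (2 / Real.pi) * (lam / mu) ^ (((j : ℝ) - (i : ℝ)) / 2) *
    (∫ y in (0 : ℝ)..Real.pi,
      Real.exp (-(mu * t * gam (lam / mu) y)) / gam (lam / mu) y *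
        (aco (lam / mu) i y * aco (lam / mu) j y)) +
  (1 - lam / mu) * (lam / mu) ^ j

/-- Erlang(n) density with rate `mu`: f_n(t) = μⁿ t^{n−1} e^{−μt}/(n−1)!. -/
noncomputable def erl (mu : ℝ) (n : ℕ) (t : ℝ) : ℝ :=
  mu ^ n * t ^ (n - 1) * Real.exp (-(mu * t)) / (Nat.factorial (n - 1) : ℝ)

/-- Expected total time to complete queue with `a` customers first, then queue with `b`. -/
noncomputable def ETT (lam mu : ℝ) (a b : ℕ) : ℝ :=
  ((a : ℝ) + 2) / mu + (1 / mu) * ∫ t in Set.Ioi (0 : ℝ), erl mu (a + 1) t * EL lam mu b t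

section Aux
open Metric

lemma gam_pos {r : ℝ} (h0 : 0 ≤ r) (h1 : r < 1) (y : ℝ) : 0 < gam r y := by
  have hs : Real.sqrt r < 1 := by
    rw [show (1:ℝ) = Real.sqrt 1 by simp]
    exact Real.sqrt_lt_sqrt h0 h1
  have hc := Real.cos_le_one y
  have hc' := Real.neg_one_le_cos y
  have hsn := Real.sqrt_nonneg r
  have hsq := Real.sq_sqrt h0
  unfold gam
  nlinarith [sq_nonneg (1 - Real.sqrt r), mul_le_mul_of_nonneg_left hc hsn]

lemma gam_cont (r : ℝ) : Continuous (gam r) := by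
  unfold gam; continuity

lemma aco_cont (r : ℝ) (k : ℕ) : Continuous (aco r k) := by
  unfold aco; continuity

lemma aco_bound {r : ℝ} (k : ℕ) (y : ℝ) : |aco r k y| ≤ 1 + Real.sqrt r := by
  unfold aco
  have h1 := Real.abs_sin_le_one ((k:ℝ)*y)
  have h2 := Real.abs_sin_le_one (((k:ℝ)+1)*y)
  have hsn := Real.sqrt_nonneg r
  calc |Real.sin ((k:ℝ)*y) - Real.sqrt r * Real.sin (((k:ℝ)+1)*y)|
      ≤ |Real.sin ((k:ℝ)*y)| + |Real.sqrt r * Real.sin (((k:ℝ)+1)*y)| := abs_sub _ _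
    _ ≤ 1 + Real.sqrt r := by
        rw [abs_mul, abs_of_nonneg hsn]
        nlinarith

lemma aco_rec (r : ℝ) (k : ℕ) (y : ℝ) :
    aco r k y + aco r (k+2) y = 2 * Real.cos y * aco r (k+1) y := by
  unfold aco
  push_cast
  have key : ∀ a : ℝ, Real.sin (a - y) + Real.sin (a + y) = 2 * Real.cos y * Real.sin a := by
    intro a; rw [Real.sin_sub, Real.sin_add]; ring
  have e1 : Real.sin ((k:ℝ)*y) + Real.sin (((k:ℝ)+2)*y)
      = 2 * Real.cos y * Real.sin (((k:ℝ)+1)*y) := by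
    have := key (((k:ℝ)+1)*y)
    rw [show ((k:ℝ)+1)*y - y = (k:ℝ)*y by ring, show ((k:ℝ)+1)*y + y = ((k:ℝ)+2)*y by ring] at this
    exact this
  have e2 : Real.sin (((k:ℝ)+1)*y) + Real.sin (((k:ℝ)+3)*y)
      = 2 * Real.cos y * Real.sin (((k:ℝ)+2)*y) := by
    have := key (((k:ℝ)+2)*y)
    rw [show ((k:ℝ)+2)*y - y = ((k:ℝ)+1)*y by ring, show ((k:ℝ)+2)*y + y = ((k:ℝ)+3)*y by ring] at this
    exact this
  have h21 : ((k:ℝ)+2+1) = ((k:ℝ)+3) := by ring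
  have h11 : ((k:ℝ)+1+1) = ((k:ℝ)+2) := by ring
  rw [h21, h11]
  linear_combination e1 - Real.sqrt r * e2

lemma hasDerivAt_key (mu r : ℝ) (hmu : 0 < mu) (h0 : 0 ≤ r) (h1 : r < 1)
    (i d : ℕ) (t : ℝ) (ht : 0 < t) :
    HasDerivAt (fun s : ℝ => ∫ y in (0:ℝ)..Real.pi,
        Real.exp (-(mu * s * gam r y)) / gam r y * (aco r i y * aco r d y))
      (∫ y in (0:ℝ)..Real.pi,
        Real.exp (-(mu * t * gam r y)) * (-(mu * (aco r i y * aco r d y)))) t := by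
  have hgne : ∀ y, gam r y ≠ 0 := fun y => (gam_pos h0 h1 y).ne'
  have hcF : ∀ s : ℝ, Continuous (fun y => Real.exp (-(mu * s * gam r y)) / gam r y *
      (aco r i y * aco r d y)) := by
    intro s
    exact ((Real.continuous_exp.comp ((continuous_const.mul (gam_cont r)).neg)).div
      (gam_cont r) hgne).mul ((aco_cont r i).mul (aco_cont r d))
  have hcF' : ∀ s : ℝ, Continuous (fun y => Real.exp (-(mu * s * gam r y)) *
      (-(mu * (aco r i y * aco r d y)))) := by
    intro s
    exact (Real.continuous_exp.comp ((continuous_const.mul (gam_cont r)).neg)).mul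
      (continuous_const.mul ((aco_cont r i).mul (aco_cont r d))).neg
  have hεpos : 0 < t/2 := by linarith
  have := intervalIntegral.hasDerivAt_integral_of_dominated_loc_of_deriv_le
    (F := fun s y => Real.exp (-(mu * s * gam r y)) / gam r y * (aco r i y * aco r d y))
    (F' := fun s y => Real.exp (-(mu * s * gam r y)) * (-(mu * (aco r i y * aco r d y))))
    (x₀ := t) (a := 0) (b := Real.pi) (μ := volume)
    (bound := fun _ => mu * (1 + Real.sqrt r)^2)
    (Metric.ball_mem_nhds t hεpos)
    (Eventually.of_forall fun s => ((hcF s).aestronglyMeasurable))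
    ((hcF t).intervalIntegrable 0 Real.pi)
    ((hcF' t).aestronglyMeasurable)
    ?_ (intervalIntegrable_const) ?_
  · exact this.2
  · refine Eventually.of_forall fun y _ => fun x hx => ?_
    have hxpos : 0 < x := by
      have := abs_lt.mp (mem_ball_iff_norm.mp hx); linarith [this.1]
    have hexp : Real.exp (-(mu * x * gam r y)) ≤ 1 := by
      apply Real.exp_le_one_iff.mpr
      have hg := gam_pos h0 h1 y
      nlinarith [mul_pos (mul_pos hmu hxpos) hg]
    have hb1 := aco_bound (r := r) i y
    have hb2 := aco_bound (r := r) d y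
    have ha1 : (0:ℝ) ≤ |aco r i y| := abs_nonneg _
    have ha2 : (0:ℝ) ≤ |aco r d y| := abs_nonneg _
    have hsn : (0:ℝ) ≤ Real.sqrt r := Real.sqrt_nonneg r
    rw [Real.norm_eq_abs, abs_mul, abs_neg, abs_mul, abs_mul,
      abs_of_pos (Real.exp_pos _), abs_of_pos hmu]
    have hab : |aco r i y| * |aco r d y| ≤ (1 + Real.sqrt r)^2 := by nlinarith
    have hE := Real.exp_pos (-(mu * x * gam r y))
    calc Real.exp (-(mu * x * gam r y)) * (mu * (|aco r i y| * |aco r d y|))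
        ≤ 1 * (mu * ((1 + Real.sqrt r)^2)) := by
          apply mul_le_mul hexp (by nlinarith) (by positivity) (by norm_num)
      _ = mu * (1 + Real.sqrt r)^2 := by ring
  · refine Eventually.of_forall fun y _ => fun x _ => ?_
    have hd1 : HasDerivAt (fun s : ℝ => -(mu * s * gam r y)) (-(mu * gam r y)) x := by
      exact (((hasDerivAt_id' x).const_mul mu).mul_const (gam r y)).neg.congr_deriv (by ring)
    have := ((hd1.exp.div_const (gam r y)).mul_const (aco r i y * aco r d y))
    refine this.congr_deriv ?_
    have hg := hgne y
    rw [mul_div_assoc, show -(mu * gam r y) / gam r y = -mu by field_simp]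
    ring

end Aux

/-- Kolmogorov forward equation for j ≥ 1:
d/dt p_{ij}(t) = λ·p_{i,j−1}(t) + μ·p_{i,j+1}(t) − (λ+μ)·p_{ij}(t) on (0,∞). -/
theorem pq_kolmogorov_forward (lam mu : ℝ) (hlam : 0 < lam) (hmu : 0 < mu)
    (hρ : lam / mu < 1) (i j : ℕ) (hj : 1 ≤ j) :
    ∀ t : ℝ, 0 < t →
      HasDerivAt (fun s : ℝ => pq lam mu i j s)
        (lam * pq lam mu i (j - 1) t + mu * pq lam mu i (j + 1) t
          - (lam + mu) * pq lam mu i j t) t := by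
  intro t ht
  obtain ⟨k, rfl⟩ : ∃ k, j = k + 1 := ⟨j - 1, (Nat.succ_pred_eq_of_pos hj).symm⟩
  simp only [pq, Nat.add_sub_cancel]
  have h0 : (0:ℝ) ≤ lam / mu := le_of_lt (div_pos hlam hmu)
  have hρ0 : (0:ℝ) < lam / mu := div_pos hlam hmu
  set r := lam / mu with hrdef
  have hlam_eq : lam = mu * r := by
    rw [hrdef, mul_div_assoc']; exact (mul_div_cancel_left₀ lam hmu.ne').symm
  have hgne : ∀ y, gam r y ≠ 0 := fun y => (gam_pos h0 hρ y).ne'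
  have hrs : Real.sqrt r * Real.sqrt r = r := Real.mul_self_sqrt h0
  -- continuity of integrands
  have hcont : ∀ d : ℕ, Continuous (fun y => Real.exp (-(mu * t * gam r y)) / gam r y *
      (aco r i y * aco r d y)) := by
    intro d
    exact ((Real.continuous_exp.comp ((continuous_const.mul (gam_cont r)).neg)).div
      (gam_cont r) hgne).mul ((aco_cont r i).mul (aco_cont r d))
  have hint : ∀ (c : ℝ) (d : ℕ), IntervalIntegrable
      (fun y => c * (Real.exp (-(mu * t * gam r y)) / gam r y * (aco r i y * aco r d y)))
      volume 0 Real.pi := fun c d => (continuous_const.mul (hcont d)).intervalIntegrable 0 Real.pi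
  -- the combined integral identity
  have hKey : mu * Real.sqrt r * (∫ y in (0:ℝ)..Real.pi,
        Real.exp (-(mu * t * gam r y)) / gam r y * (aco r i y * aco r k y))
      + mu * Real.sqrt r * (∫ y in (0:ℝ)..Real.pi,
        Real.exp (-(mu * t * gam r y)) / gam r y * (aco r i y * aco r (k+2) y))
      - (lam + mu) * (∫ y in (0:ℝ)..Real.pi,
        Real.exp (-(mu * t * gam r y)) / gam r y * (aco r i y * aco r (k+1) y))
      = ∫ y in (0:ℝ)..Real.pi,
        Real.exp (-(mu * t * gam r y)) * (-(mu * (aco r i y * aco r (k+1) y))) := by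
    rw [← intervalIntegral.integral_const_mul, ← intervalIntegral.integral_const_mul,
      ← intervalIntegral.integral_const_mul,
      ← intervalIntegral.integral_add (hint _ k) (hint _ (k+2)),
      ← intervalIntegral.integral_sub ((hint _ k).add (hint _ (k+2))) (hint _ (k+1))]
    apply intervalIntegral.integral_congr
    intro y _
    have hrec := aco_rec r k y
    have hg := hgne y
    have hgam : gam r y = 1 + r - 2 * Real.sqrt r * Real.cos y := rfl
    field_simp
    rw [hlam_eq, hgam]
    linear_combination (aco r i y * mu * Real.sqrt r) * hrec
  -- derivative
  have hder := hasDerivAt_key mu r hmu h0 hρ i (k+1) t ht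
  have H := (hder.const_mul ((2 / Real.pi) * r ^ (((((k:ℕ)+1 : ℕ) : ℝ) - (i : ℝ)) / 2))).add_const
      ((1 - r) * r ^ (k+1))
  refine H.congr_deriv (Eq.symm ?_)
  push_cast
  have r1 : r ^ (((k:ℝ) + 1 - (i:ℝ))/2) = r ^ (((k:ℝ) - (i:ℝ))/2) * Real.sqrt r := by
    rw [Real.sqrt_eq_rpow, ← Real.rpow_add hρ0]
    congr 1; ring
  have r2 : r ^ (((k:ℝ) + 1 + 1 - (i:ℝ))/2) = r ^ (((k:ℝ) - (i:ℝ))/2) * r := by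
    rw [show ((k:ℝ) + 1 + 1 - (i:ℝ))/2 = ((k:ℝ) - (i:ℝ))/2 + 1 by ring,
      Real.rpow_add hρ0, Real.rpow_one]
  rw [r1, r2]
  linear_combination (2/Real.pi * r ^ (((k:ℝ) - (i:ℝ))/2) * Real.sqrt r) * hKey
    + ((2/Real.pi) * r ^ (((k:ℝ) - (i:ℝ))/2) * (∫ y in (0:ℝ)..Real.pi,
        Real.exp (-(mu * t * gam r y)) / gam r y * (aco r i y * aco r k y))
        + (1-r)^2 * r^k) * hlam_eq
    - ((2/Real.pi) * r ^ (((k:ℝ) - (i:ℝ))/2) * mu * ((∫ y in (0:ℝ)..Real.pi,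
        Real.exp (-(mu * t * gam r y)) / gam r y * (aco r i y * aco r k y))
        + (∫ y in (0:ℝ)..Real.pi,
        Real.exp (-(mu * t * gam r y)) / gam r y * (aco r i y * aco r (k+2) y)))) * hrs
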